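/- Let G be a group, ψ : G → ℤ a group homomorphism, and K = ker ψ. Let g₀, g₁, …, g_k ∈ G satisfy ψ(g_j) = 1 for all j, and suppose that ⁅g_j, g_{j+1}⁆ ∈ ⁅K,K⁆ for every j = 0, …, k−1. Then ⁅g₀, g_k⁆ ∈ ⁅K,K⁆. -/

import Mathlib

open scoped commutatorElement

private lemma key_trans {G : Type*} [Group G] (ψ : G →* Multiplicative ℤ)
    {a b c : G} (ha : ψ a = Multiplicative.ofAdd 1) (hb : ψ b = Multiplicative.ofAdd 1)
    (hc : ψ c = Multiplicative.ofAdd 1)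
    (hab : ⁅a, b⁆ ∈ ⁅ψ.ker, ψ.ker⁆) (hbc : ⁅b, c⁆ ∈ ⁅ψ.ker, ψ.ker⁆) :
    ⁅a, c⁆ ∈ ⁅ψ.ker, ψ.ker⁆ := by
  set N : Subgroup G := ⁅ψ.ker, ψ.ker⁆ with hN
  haveI : N.Normal := Subgroup.commutator_normal ψ.ker ψ.ker
  let π : G →* G ⧸ N := QuotientGroup.mk' N
  have hker1 : a * b⁻¹ ∈ ψ.ker := by
    rw [MonoidHom.mem_ker, map_mul, map_inv, ha, hb, mul_inv_cancel]
  have hker2 : c * b⁻¹ ∈ ψ.ker := by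
    rw [MonoidHom.mem_ker, map_mul, map_inv, hc, hb, mul_inv_cancel]
  have hcomm : ∀ {x y : G}, ⁅x, y⁆ ∈ N → Commute (π x) (π y) := by
    intro x y hxy
    rw [← commutatorElement_eq_one_iff_commute, ← map_commutatorElement]
    exact (QuotientGroup.eq_one_iff _).mpr hxy
  have cab : Commute (π a) (π b) := hcomm hab
  have cbc : Commute (π b) (π c) := hcomm hbc
  have cxy : Commute (π (a * b⁻¹)) (π (c * b⁻¹)) :=
    hcomm (Subgroup.commutator_mem_commutator hker1 hker2)
  have cxb : Commute (π (a * b⁻¹)) (π b) := by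
    rw [map_mul, map_inv]
    exact Commute.mul_left cab (Commute.refl (π b)).inv_left
  have cyb : Commute (π (c * b⁻¹)) (π b) := by
    rw [map_mul, map_inv]
    exact Commute.mul_left cbc.symm (Commute.refl (π b)).inv_left
  have cac : Commute (π a) (π c) := by
    have ha' : π a = π (a * b⁻¹) * π b := by rw [map_mul, map_inv, inv_mul_cancel_right]
    have hc' : π c = π (c * b⁻¹) * π b := by rw [map_mul, map_inv, inv_mul_cancel_right]
    rw [ha', hc']
    exact Commute.mul_left (cxy.mul_right cxb) (cyb.symm.mul_right (Commute.refl (π b)))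
  have : π ⁅a, c⁆ = 1 := by
    rw [map_commutatorElement]
    exact commutatorElement_eq_one_iff_commute.mpr cac
  exact (QuotientGroup.eq_one_iff _).mp this

/-- Let `G` be a group, `ψ : G → ℤ` a group homomorphism (with `ℤ` viewed
multiplicatively as `Multiplicative ℤ`), and `K = ker ψ`. Let `g 0, …, g k ∈ G` satisfy
`ψ (g j) = 1` for all `j ≤ k`, and suppose `⁅g j, g (j+1)⁆ ∈ ⁅K, K⁆` for every `j < k`.
Then `⁅g 0, g k⁆ ∈ ⁅K, K⁆`. -/
theorem commutator_mem_of_chain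
    {G : Type*} [Group G] (ψ : G →* Multiplicative ℤ)
    (k : ℕ) (g : ℕ → G)
    (hg : ∀ j ≤ k, ψ (g j) = Multiplicative.ofAdd 1)
    (hchain : ∀ j < k, ⁅g j, g (j + 1)⁆ ∈ ⁅ψ.ker, ψ.ker⁆) :
    ⁅g 0, g k⁆ ∈ ⁅ψ.ker, ψ.ker⁆ := by
  induction k with
  | zero => simpa [commutatorElement_self] using one_mem _
  | succ n ih =>
    exact key_trans ψ (hg 0 (Nat.zero_le _)) (hg n (Nat.le_succ n)) (hg (n + 1) le_rfl)
      (ih (fun j hj => hg j (hj.trans (Nat.le_succ n)))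
          (fun j hj => hchain j (hj.trans (Nat.lt_succ_self n))))
      (hchain n (Nat.lt_succ_self n))
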